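/- Suppose T is in case 1 (k < 0 and M < m). Then T lies in the band bounded by the exponentials I_h^m(t) = a·e^{kt} + b_m and I_h^M(t) = a·e^{kt} + b_M; that is, for every index i one has a·e^{k t_i} + b_m ≤ T_i ≤ a·e^{k t_i} + b_M. -/
import Mathlib


/-- In case 1 (`k < 0` and `M < m`), the data `T` lies in the band
bounded by the exponentials `I_h^m(t) = a·e^{kt} + b_m` and
`I_h^M(t) = a·e^{kt} + b_M`: for every index `i`,
`a·e^{k t_i} + b_m ≤ T_i ≤ a·e^{k t_i} + b_M`. -/
theorem case1_band {n : ℕ}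
    (t : Fin n → ℝ) (ht : StrictMono t) (T : Fin n → ℝ)
    (k : ℝ) (hk : k < 0)
    (m M : Fin n)
    (hm_min : ∀ i, T m ≤ T i) (hm_first : ∀ i, T i = T m → m ≤ i)
    (hM_max : ∀ i, T i ≤ T M) (hM_last : ∀ i, T i = T M → i ≤ M)
    (hMm : M < m)
    (a : ℝ)
    (ha_mem :
      (∃ i, i < m ∧ a = (T i - T m) / (Real.exp (k * t i) - Real.exp (k * t m))) ∨
      (∃ j, M < j ∧ a = (T j - T M) / (Real.exp (k * t j) - Real.exp (k * t M))))
    (ha_min :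
      (∀ i, i < m → a ≤ (T i - T m) / (Real.exp (k * t i) - Real.exp (k * t m))) ∧
      (∀ j, M < j → a ≤ (T j - T M) / (Real.exp (k * t j) - Real.exp (k * t M))))
    (bm bM : ℝ)
    (hbm : bm = T m - a * Real.exp (k * t m))
    (hbM : bM = T M - a * Real.exp (k * t M)) :
    ∀ i, a * Real.exp (k * t i) + bm ≤ T i ∧ T i ≤ a * Real.exp (k * t i) + bM := by
  subst hbm hbM
  have hexp : ∀ i j : Fin n, i < j → Real.exp (k * t j) < Real.exp (k * t i) := by
    intro i j hij
    exact Real.exp_lt_exp.2 (by nlinarith [ht hij])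
  have ha0 : 0 ≤ a := by
    rcases ha_mem with ⟨i, him, rfl⟩ | ⟨j, hjM, rfl⟩
    · exact div_nonneg (by linarith [hm_min i]) (by linarith [hexp i m him])
    · exact div_nonneg_of_nonpos (by linarith [hM_max j])
        (by linarith [hexp M j hjM])
  intro i
  constructor
  · rcases lt_or_ge i m with him | hmi
    · have hd : 0 < Real.exp (k * t i) - Real.exp (k * t m) := by
        linarith [hexp i m him]
      have h := (le_div_iff₀ hd).1 (ha_min.1 i him)
      rw [mul_sub] at h
      linarith
    · have hd : Real.exp (k * t i) ≤ Real.exp (k * t m) := by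
        rcases eq_or_lt_of_le hmi with h | h
        · rw [h]
        · linarith [hexp m i h]
      have := mul_nonneg ha0 (sub_nonneg.2 hd)
      rw [mul_sub] at this
      linarith [hm_min i]
  · rcases lt_or_ge M i with hMi | hiM
    · have hd : Real.exp (k * t i) - Real.exp (k * t M) < 0 := by
        linarith [hexp M i hMi]
      have h := (le_div_iff_of_neg hd).1 (ha_min.2 i hMi)
      rw [mul_sub] at h
      linarith
    · have hd : Real.exp (k * t M) ≤ Real.exp (k * t i) := by
        rcases eq_or_lt_of_le hiM with h | h
        · rw [h]
        · linarith [hexp i M h]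
      have := mul_nonneg ha0 (sub_nonneg.2 hd)
      rw [mul_sub] at this
      linarith [hM_max i]
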